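/- Assume the spectral radius of F satisfies ρ(F) < 1, and fix r > 0, C > 0 and x_0 ∈ ℝ^n. There exists a constant κ, depending only on A, B, Q, R, Q_f, P, r, C and ‖x_0‖ (but not on the horizon T), with the following property: for every horizon T, every disturbance sequence with ‖w_t‖ ≤ r for all t, and every η_0,…,η_{T−1} ∈ ℝ^n with ‖η_t‖ ≤ C for all t, letting u^η be the closed-loop control with u^η_t = −(R + BᵀPB)⁻¹ Bᵀ (P A x_t + ψ_t − η_t) (x the trajectory generated by u^η from x_0), letting u* = u^0, and writing J_X(·) for the cost with terminal cost matrix X, it holds that (J_{Q_f}(u^η) − J_{Q_f}(u*)) ≤ (J_P(u^η) − J_P(u*)) + κ. -/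

import Mathlib

open Matrix Filter
open scoped ENNReal NNReal

noncomputable def evNorm {n : ℕ} (x : Fin n → ℝ) : ℝ := Real.sqrt (∑ i, x i ^ 2)

noncomputable def specNorm {n m : ℕ} (M : Matrix (Fin n) (Fin m) ℝ) : ℝ :=
  sSup {c : ℝ | ∃ x : Fin m → ℝ, evNorm x ≤ 1 ∧ c = evNorm (M *ᵥ x)}

noncomputable def lambdaMin {n : ℕ} (M : Matrix (Fin n) (Fin n) ℝ) : ℝ :=
  sInf {c : ℝ | ∃ x : Fin n → ℝ, evNorm x = 1 ∧ c = x ⬝ᵥ (M *ᵥ x)}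

noncomputable def specRad {n : ℕ} (M : Matrix (Fin n) (Fin n) ℝ) : ENNReal :=
  spectralRadius ℂ (M.map Complex.ofReal)

noncomputable def seqState {n m : ℕ} (A : Matrix (Fin n) (Fin n) ℝ)
    (B : Matrix (Fin n) (Fin m) ℝ) (x0 : Fin n → ℝ)
    (u : ℕ → Fin m → ℝ) (w : ℕ → Fin n → ℝ) : ℕ → Fin n → ℝ
  | 0 => x0
  | t + 1 => A *ᵥ seqState A B x0 u w t + B *ᵥ u t + w t

noncomputable def trajCost {n m : ℕ} (A : Matrix (Fin n) (Fin n) ℝ)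
    (B : Matrix (Fin n) (Fin m) ℝ) (Q : Matrix (Fin n) (Fin n) ℝ)
    (R : Matrix (Fin m) (Fin m) ℝ) (Qf : Matrix (Fin n) (Fin n) ℝ)
    (x0 : Fin n → ℝ) (w : ℕ → Fin n → ℝ) (T : ℕ) (u : ℕ → Fin m → ℝ) : ℝ :=
  (∑ t ∈ Finset.range T,
      (seqState A B x0 u w t ⬝ᵥ (Q *ᵥ seqState A B x0 u w t) + u t ⬝ᵥ (R *ᵥ u t)))
    + seqState A B x0 u w T ⬝ᵥ (Qf *ᵥ seqState A B x0 u w T)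

noncomputable def mpcCost {n m : ℕ} (A : Matrix (Fin n) (Fin n) ℝ)
    (B : Matrix (Fin n) (Fin m) ℝ) (Q : Matrix (Fin n) (Fin n) ℝ)
    (R : Matrix (Fin m) (Fin m) ℝ) (P : Matrix (Fin n) (Fin n) ℝ)
    (z : Fin n → ℝ) (what : ℕ → Fin n → ℝ) (k : ℕ) (u : Fin k → Fin m → ℝ) : ℝ :=
  trajCost A B Q R P z what k (fun t => if h : t < k then u ⟨t, h⟩ else 0)

section
variable {n : ℕ}
attribute [local instance] Matrix.linftyOpNormedAddCommGroup Matrix.linftyOpNormedRing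
  Matrix.linftyOpNormedAlgebra

local instance : CompleteSpace (Matrix (Fin n) (Fin n) ℂ) :=
  FiniteDimensional.complete ℂ (Matrix (Fin n) (Fin n) ℂ)

lemma norm_map_ofReal (M : Matrix (Fin n) (Fin n) ℝ) : ‖M.map Complex.ofReal‖ = ‖M‖ := by
  rw [Matrix.linfty_opNorm_def, Matrix.linfty_opNorm_def]
  congr 1
  apply Finset.sup_congr rfl
  intro i _
  apply Finset.sum_congr rfl
  intro j _
  simp [Matrix.map_apply]

lemma geom_bound (F : Matrix (Fin n) (Fin n) ℝ) (h : specRad F < 1) :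
    ∃ c γ : ℝ, 1 ≤ c ∧ 0 < γ ∧ γ < 1 ∧ ∀ k, ‖F ^ k‖ ≤ c * γ ^ k := by
  set a : Matrix (Fin n) (Fin n) ℂ := F.map Complex.ofReal with ha
  have hnorm : ∀ k : ℕ, ‖F ^ k‖ = ‖a ^ k‖ := by
    intro k
    have : F.map Complex.ofReal ^ k = (F ^ k).map Complex.ofReal :=
      (map_pow (Complex.ofRealHom.mapMatrix) F k).symm
    rw [ha, this, norm_map_ofReal]
  have hglf := spectrum.pow_nnnorm_pow_one_div_tendsto_nhds_spectralRadius a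
  rw [← specRad] at hglf
  obtain ⟨γ, hγ1, hγ2⟩ := ENNReal.lt_iff_exists_nnreal_btwn.mp h
  have hγpos : 0 < γ := by
    rcases (zero_le : 0 ≤ specRad F).lt_or_eq with h0 | h0
    · exact_mod_cast (ENNReal.coe_pos.mp (h0.trans hγ1))
    · exact_mod_cast ENNReal.coe_pos.mp (h0 ▸ hγ1)
  have hγlt1 : (γ : ℝ) < 1 := by exact_mod_cast hγ2
  have hev : ∀ᶠ (k : ℕ) in atTop, (‖a ^ k‖₊ : ℝ≥0∞) ^ (1 / (k:ℝ)) < (γ : ℝ≥0∞) :=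
    hglf.eventually_lt_const hγ1
  obtain ⟨K, hK⟩ := eventually_atTop.mp hev
  have hpow : ∀ k, K + 1 ≤ k → ‖F ^ k‖ ≤ (γ : ℝ) ^ k := by
    intro k hk
    have hk0 : (k : ℝ) ≠ 0 := Nat.cast_ne_zero.mpr (by omega)
    have hkpos : (0 : ℝ) < k := by positivity
    have h1 := hK k (by omega)
    have h2 : (‖a ^ k‖₊ : ℝ≥0∞) < ((γ : ℝ≥0∞)) ^ k := by
      calc (‖a ^ k‖₊ : ℝ≥0∞) = ((‖a ^ k‖₊ : ℝ≥0∞) ^ (1 / (k:ℝ))) ^ (k:ℝ) := by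
            rw [← ENNReal.rpow_mul, one_div_mul_cancel hk0, ENNReal.rpow_one]
        _ < ((γ : ℝ≥0∞)) ^ (k:ℝ) := ENNReal.rpow_lt_rpow h1 hkpos
        _ = ((γ : ℝ≥0∞)) ^ k := ENNReal.rpow_natCast _ k
    rw [← ENNReal.coe_pow, ENNReal.coe_lt_coe] at h2
    rw [hnorm]
    calc ‖a ^ k‖ = ((‖a ^ k‖₊ : ℝ≥0) : ℝ) := rfl
      _ ≤ ((γ ^ k : ℝ≥0) : ℝ) := by exact_mod_cast h2.le
      _ = (γ : ℝ) ^ k := by push_cast; ring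
  refine ⟨1 + ∑ j ∈ Finset.range (K + 1), ‖F ^ j‖ / (γ : ℝ) ^ j, γ, ?_, hγpos, hγlt1, ?_⟩
  · have : (0:ℝ) ≤ ∑ j ∈ Finset.range (K + 1), ‖F ^ j‖ / (γ : ℝ) ^ j :=
      Finset.sum_nonneg fun j _ => by positivity
    linarith
  · intro k
    rcases le_or_gt k K with hkK | hkK
    · have hmem : k ∈ Finset.range (K + 1) := Finset.mem_range.mpr (by omega)
      have h1 : ‖F ^ k‖ / (γ : ℝ) ^ k ≤ ∑ j ∈ Finset.range (K + 1), ‖F ^ j‖ / (γ : ℝ) ^ j :=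
        Finset.single_le_sum (f := fun j => ‖F ^ j‖ / (γ : ℝ) ^ j) (fun j _ => by positivity) hmem
      have hγk : (0:ℝ) < (γ : ℝ) ^ k := by positivity
      rw [div_le_iff₀ hγk] at h1
      nlinarith [pow_pos (show (0:ℝ) < γ from hγpos) k]
    · have := hpow k (by omega)
      have hγk : (0:ℝ) ≤ (γ : ℝ) ^ k := by positivity
      have hsum : (0:ℝ) ≤ ∑ j ∈ Finset.range (K + 1), ‖F ^ j‖ / (γ : ℝ) ^ j :=
        Finset.sum_nonneg fun j _ => by positivity
      nlinarith
end

section aux2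
variable {n m p q : ℕ}
attribute [local instance] Matrix.linftyOpNormedAddCommGroup Matrix.linftyOpNormedRing

lemma entry_nnnorm_le (M : Matrix (Fin p) (Fin q) ℝ) (i : Fin p) (j : Fin q) :
    ‖M i j‖₊ ≤ ‖M‖₊ := by
  rw [Matrix.linfty_opNNNorm_def]
  refine le_trans ?_ (Finset.le_sup (Finset.mem_univ i))
  exact Finset.single_le_sum (f := fun j => ‖M i j‖₊) (fun _ _ => zero_le) (Finset.mem_univ j)

lemma transpose_norm_le (M : Matrix (Fin n) (Fin n) ℝ) : ‖Mᵀ‖ ≤ n * ‖M‖ := by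
  have h : ‖Mᵀ‖₊ ≤ n * ‖M‖₊ := by
    rw [Matrix.linfty_opNNNorm_def]
    refine Finset.sup_le fun i _ => ?_
    calc ∑ j, ‖Mᵀ i j‖₊ ≤ ∑ _j : Fin n, ‖M‖₊ :=
          Finset.sum_le_sum fun j _ => entry_nnnorm_le M j i
      _ = n * ‖M‖₊ := by simp [mul_comm]
  calc ‖Mᵀ‖ = ((‖Mᵀ‖₊ : ℝ≥0) : ℝ) := rfl
    _ ≤ (((n : ℝ≥0) * ‖M‖₊ : ℝ≥0) : ℝ) := by exact_mod_cast h
    _ = n * ‖M‖ := by push_cast; rfl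

lemma dot_bound (v y : Fin n → ℝ) : |v ⬝ᵥ y| ≤ n * ‖v‖ * ‖y‖ := by
  calc |v ⬝ᵥ y| ≤ ∑ i, |v i * y i| := Finset.abs_sum_le_sum_abs _ _
    _ ≤ ∑ _i : Fin n, ‖v‖ * ‖y‖ := by
        refine Finset.sum_le_sum fun i _ => ?_
        rw [abs_mul]
        exact mul_le_mul (norm_le_pi_norm v i) (norm_le_pi_norm y i) (abs_nonneg _) (norm_nonneg _)
    _ = n * ‖v‖ * ‖y‖ := by simp [mul_assoc]

lemma quad_bound (M : Matrix (Fin n) (Fin n) ℝ) (v : Fin n → ℝ) (Xb : ℝ) (hv : ‖v‖ ≤ Xb) :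
    |v ⬝ᵥ (M *ᵥ v)| ≤ n * ‖M‖ * Xb ^ 2 := by
  have h0 : (0:ℝ) ≤ ‖v‖ := norm_nonneg _
  have h1 : ‖M *ᵥ v‖ ≤ ‖M‖ * ‖v‖ := Matrix.linfty_opNorm_mulVec M v
  calc |v ⬝ᵥ (M *ᵥ v)| ≤ n * ‖v‖ * ‖M *ᵥ v‖ := dot_bound v (M *ᵥ v)
    _ ≤ n * ‖M‖ * Xb ^ 2 := by
        have h2 : ‖v‖ ^ 2 ≤ Xb ^ 2 := pow_le_pow_left₀ h0 hv 2
        have h3 : ‖v‖ * ‖M *ᵥ v‖ ≤ ‖M‖ * ‖v‖ ^ 2 := by nlinarith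
        have h4 : ‖M‖ * ‖v‖ ^ 2 ≤ ‖M‖ * Xb ^ 2 := by nlinarith [norm_nonneg M]
        have h5 : (0:ℝ) ≤ (n:ℝ) := Nat.cast_nonneg n
        nlinarith

lemma gsum (γ : ℝ) (h0 : 0 ≤ γ) (h1 : γ < 1) (k : ℕ) :
    ∑ i ∈ Finset.range k, γ ^ i ≤ 1 / (1 - γ) := by
  rw [geom_sum_eq (by linarith) k]
  have h2 : (0:ℝ) < 1 - γ := by linarith
  have h3 : (γ ^ k - 1) / (γ - 1) = (1 - γ ^ k) / (1 - γ) := by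
    rw [← neg_div_neg_eq]; ring_nf
  rw [h3, div_le_div_iff₀ h2 h2]
  nlinarith [pow_nonneg h0 k]

end aux2

section aux3
variable {n : ℕ}
attribute [local instance] Matrix.linftyOpNormedAddCommGroup Matrix.linftyOpNormedRing

lemma mulVec_sum' (F : Matrix (Fin n) (Fin n) ℝ) (s : Finset ℕ) (f : ℕ → Fin n → ℝ) :
    F *ᵥ (∑ i ∈ s, f i) = ∑ i ∈ s, F *ᵥ f i := by
  rw [show F *ᵥ (∑ i ∈ s, f i) = F.mulVecLin (∑ i ∈ s, f i) from rfl, map_sum]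
  simp [Matrix.mulVecLin_apply]

lemma closed_form (F : Matrix (Fin n) (Fin n) ℝ) (x d : ℕ → Fin n → ℝ) (T : ℕ)
    (hrec : ∀ t, t < T → x (t + 1) = F *ᵥ x t + d t) :
    ∀ t, t ≤ T → x t = F ^ t *ᵥ x 0 + ∑ i ∈ Finset.range t, F ^ (t - 1 - i) *ᵥ d i := by
  intro t
  induction t with
  | zero => intro _; simp
  | succ t ih =>
    intro ht
    rw [hrec t (by omega), ih (by omega), Matrix.mulVec_add, Matrix.mulVec_mulVec, ← pow_succ']
    rw [mulVec_sum', Finset.sum_range_succ]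
    have hsum : ∀ i ∈ Finset.range t,
        F *ᵥ (F ^ (t - 1 - i) *ᵥ d i) = F ^ (t + 1 - 1 - i) *ᵥ d i := by
      intro i hi
      rw [Matrix.mulVec_mulVec]
      have hi' := Finset.mem_range.mp hi
      have he : t + 1 - 1 - i = t - 1 - i + 1 := by omega
      rw [he, pow_succ']
    rw [Finset.sum_congr rfl hsum]
    have : F ^ (t + 1 - 1 - t) *ᵥ d t = d t := by
      simp [Matrix.one_mulVec]
    rw [this, add_assoc]

lemma state_bound (F : Matrix (Fin n) (Fin n) ℝ) (c γ D : ℝ) (hc : 1 ≤ c) (hγ0 : 0 < γ)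
    (hγ1 : γ < 1) (hpow : ∀ k, ‖F ^ k‖ ≤ c * γ ^ k) (hD : 0 ≤ D)
    (x d : ℕ → Fin n → ℝ) (T : ℕ)
    (hrec : ∀ t, t < T → x (t + 1) = F *ᵥ x t + d t)
    (hd : ∀ t, t < T → ‖d t‖ ≤ D) :
    ∀ t, t ≤ T → ‖x t‖ ≤ c * ‖x 0‖ + c * D * (1 / (1 - γ)) := by
  intro t ht
  rw [closed_form F x d T hrec t ht]
  have h1 : ‖F ^ t *ᵥ x 0‖ ≤ c * γ ^ t * ‖x 0‖ :=
    le_trans (Matrix.linfty_opNorm_mulVec _ _)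
      (mul_le_mul_of_nonneg_right (hpow t) (norm_nonneg _))
  have h2 : ‖∑ i ∈ Finset.range t, F ^ (t - 1 - i) *ᵥ d i‖
      ≤ ∑ i ∈ Finset.range t, c * γ ^ (t - 1 - i) * D := by
    refine le_trans (norm_sum_le _ _) (Finset.sum_le_sum fun i hi => ?_)
    have hiT : i < T := lt_of_lt_of_le (Finset.mem_range.mp hi) ht
    calc ‖F ^ (t - 1 - i) *ᵥ d i‖ ≤ ‖F ^ (t - 1 - i)‖ * ‖d i‖ := Matrix.linfty_opNorm_mulVec _ _
      _ ≤ (c * γ ^ (t - 1 - i)) * D := by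
          have := hpow (t - 1 - i)
          have := hd i hiT
          have h3 : (0:ℝ) ≤ ‖d i‖ := norm_nonneg _
          have h4 : (0:ℝ) ≤ c * γ ^ (t - 1 - i) := by positivity
          nlinarith [norm_nonneg (F ^ (t - 1 - i))]
  have h5 : ∑ i ∈ Finset.range t, c * γ ^ (t - 1 - i) * D
      = c * D * ∑ i ∈ Finset.range t, γ ^ (t - 1 - i) := by
    rw [Finset.mul_sum]; exact Finset.sum_congr rfl fun i _ => by ring
  have h6 : ∑ i ∈ Finset.range t, γ ^ (t - 1 - i) = ∑ i ∈ Finset.range t, γ ^ i := by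
    rw [← Finset.sum_range_reflect]
    refine Finset.sum_congr rfl fun i hi => ?_
    congr 1
    have := Finset.mem_range.mp hi
    omega
  have h7 : ∑ i ∈ Finset.range t, γ ^ i ≤ 1 / (1 - γ) := gsum γ hγ0.le hγ1 t
  have h8 : γ ^ t ≤ 1 := pow_le_one₀ hγ0.le hγ1.le
  have hx0 : (0:ℝ) ≤ ‖x 0‖ := norm_nonneg _
  have hcD : (0:ℝ) ≤ c * D := by nlinarith
  calc ‖F ^ t *ᵥ x 0 + ∑ i ∈ Finset.range t, F ^ (t - 1 - i) *ᵥ d i‖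
      ≤ ‖F ^ t *ᵥ x 0‖ + ‖∑ i ∈ Finset.range t, F ^ (t - 1 - i) *ᵥ d i‖ := norm_add_le _ _
    _ ≤ c * γ ^ t * ‖x 0‖ + c * D * ∑ i ∈ Finset.range t, γ ^ i := by
        rw [h5, h6] at h2; linarith
    _ ≤ c * ‖x 0‖ + c * D * (1 / (1 - γ)) := by
        have h9 : c * γ ^ t * ‖x 0‖ ≤ c * 1 * ‖x 0‖ :=
          mul_le_mul_of_nonneg_right
            (mul_le_mul_of_nonneg_left h8 (by linarith : (0:ℝ) ≤ c)) hx0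
        rw [mul_one] at h9
        have := mul_le_mul_of_nonneg_left h7 hcD
        linarith

end aux3


section evn
lemma evNorm_pi_le {n : ℕ} (x : Fin n → ℝ) (b : ℝ) (hb : 0 ≤ b) (h : evNorm x ≤ b) :
    ‖x‖ ≤ b := by
  rw [pi_norm_le_iff_of_nonneg hb]
  intro i
  refine le_trans ?_ h
  rw [Real.norm_eq_abs, ← Real.sqrt_sq_eq_abs]
  exact Real.sqrt_le_sqrt
    (Finset.single_le_sum (f := fun j => x j ^ 2) (fun j _ => sq_nonneg _) (Finset.mem_univ i))
end evn

set_option maxHeartbeats 2000000 in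
theorem stmt9 (n m : ℕ)
    (A : Matrix (Fin n) (Fin n) ℝ) (B : Matrix (Fin n) (Fin m) ℝ)
    (Q : Matrix (Fin n) (Fin n) ℝ) (R : Matrix (Fin m) (Fin m) ℝ)
    (P : Matrix (Fin n) (Fin n) ℝ)
    (hQ : Q.PosSemidef) (hR : R.PosDef) (hP : P.PosDef)
    (hDARE : P = Q + Aᵀ * P * A - Aᵀ * P * B * (R + Bᵀ * P * B)⁻¹ * (Bᵀ * P * A))
    (F : Matrix (Fin n) (Fin n) ℝ)
    (hF : F = A - B * ((R + Bᵀ * P * B)⁻¹ * (Bᵀ * P * A)))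
    (Qf : Matrix (Fin n) (Fin n) ℝ)
    (hρF : specRad F < 1)
    (r C : ℝ) (hr : 0 < r) (hC : 0 < C) (x0 : Fin n → ℝ) :
    ∃ κ : ℝ, ∀ (T : ℕ) (w η : ℕ → Fin n → ℝ),
      (∀ t, t < T → evNorm (w t) ≤ r) →
      (∀ t, t < T → evNorm (η t) ≤ C) →
      ∀ (x : ℕ → Fin n → ℝ) (u : ℕ → Fin m → ℝ) (xs : ℕ → Fin n → ℝ) (us : ℕ → Fin m → ℝ),
        x 0 = x0 → (∀ t, x (t + 1) = A *ᵥ x t + B *ᵥ u t + w t) →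
        (∀ t, u t = -((((R + Bᵀ * P * B)⁻¹ * Bᵀ) *ᵥ
            (P *ᵥ (A *ᵥ x t)
              + (∑ i ∈ Finset.range (T - t), ((Fᵀ) ^ i * P) *ᵥ w (t + i)) - η t)))) →
        xs 0 = x0 → (∀ t, xs (t + 1) = A *ᵥ xs t + B *ᵥ us t + w t) →
        (∀ t, us t = -((((R + Bᵀ * P * B)⁻¹ * Bᵀ) *ᵥ
            (P *ᵥ (A *ᵥ xs t)
              + ∑ i ∈ Finset.range (T - t), ((Fᵀ) ^ i * P) *ᵥ w (t + i))))) →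
        trajCost A B Q R Qf x0 w T u - trajCost A B Q R Qf x0 w T us ≤
          trajCost A B Q R P x0 w T u - trajCost A B Q R P x0 w T us + κ := by
  letI : NormedAddCommGroup (Matrix (Fin n) (Fin n) ℝ) := Matrix.linftyOpNormedAddCommGroup
  obtain ⟨c, γ, hc, hγ0, hγ1, hpow⟩ := geom_bound F hρF
  have hc0 : (0:ℝ) ≤ c := by linarith
  have h1γ : (0:ℝ) < 1 - γ := by linarith
  obtain ⟨G, hG⟩ : ∃ G : Matrix (Fin n) (Fin n) ℝ, G = B * ((R + Bᵀ * P * B)⁻¹ * Bᵀ) := ⟨_, rfl⟩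
  obtain ⟨S, hS⟩ : ∃ S : ℝ, S = (n : ℝ) * c * ‖P‖ * r * (1 / (1 - γ)) := ⟨_, rfl⟩
  have hSnn : (0:ℝ) ≤ S := by
    rw [hS]
    refine mul_nonneg (mul_nonneg (mul_nonneg (mul_nonneg (Nat.cast_nonneg n) hc0)
      (norm_nonneg _)) hr.le) (by positivity)
  obtain ⟨D, hD⟩ : ∃ D : ℝ, D = r + ‖G‖ * (C + S) := ⟨_, rfl⟩
  have hD0 : (0:ℝ) ≤ D := by
    have : (0:ℝ) ≤ ‖G‖ * (C + S) := mul_nonneg (norm_nonneg _) (by linarith)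
    rw [hD]; linarith
  obtain ⟨Xb, hXb⟩ : ∃ Xb : ℝ, Xb = c * ‖x0‖ + c * D * (1 / (1 - γ)) := ⟨_, rfl⟩
  refine ⟨2 * ((n:ℝ) * ‖Qf‖ * Xb ^ 2) + 2 * ((n:ℝ) * ‖P‖ * Xb ^ 2), ?_⟩
  intro T w η hw hη x u xs us hx0 hxrec hu hxs0 hxsrec hus
  have hwb : ∀ t, t < T → ‖w t‖ ≤ r := fun t ht => evNorm_pi_le _ _ hr.le (hw t ht)
  have hηb : ∀ t, t < T → ‖η t‖ ≤ C := fun t ht => evNorm_pi_le _ _ hC.le (hη t ht)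
  obtain ⟨ψ, hψdef⟩ : ∃ ψ : ℕ → Fin n → ℝ,
    ψ = fun t => ∑ i ∈ Finset.range (T - t), ((Fᵀ) ^ i * P) *ᵥ w (t + i) := ⟨_, rfl⟩
  -- bound on ψ
  have hψb : ∀ t, t < T → ‖ψ t‖ ≤ S := by
    intro t ht
    rw [hψdef]
    simp only []
    calc ‖(fun t => ∑ i ∈ Finset.range (T - t), ((Fᵀ) ^ i * P) *ᵥ w (t + i)) t‖ ≤ ∑ i ∈ Finset.range (T - t), ‖((Fᵀ) ^ i * P) *ᵥ w (t + i)‖ := norm_sum_le _ _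
      _ ≤ ∑ i ∈ Finset.range (T - t), ((n:ℝ) * c * ‖P‖ * r) * γ ^ i := by
          refine Finset.sum_le_sum fun i hi => ?_
          have hti : t + i < T := by have := Finset.mem_range.mp hi; omega
          have hwi := hwb _ hti
          have h2 : ‖(Fᵀ) ^ i‖ ≤ (n:ℝ) * (c * γ ^ i) := by
            rw [← Matrix.transpose_pow]
            exact le_trans (transpose_norm_le _)
              (mul_le_mul_of_nonneg_left (hpow i) (Nat.cast_nonneg n))
          have h1 : ‖(Fᵀ) ^ i * P‖ ≤ ((n:ℝ) * (c * γ ^ i)) * ‖P‖ :=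
            le_trans (Matrix.linfty_opNorm_mul _ _)
              (mul_le_mul_of_nonneg_right h2 (norm_nonneg _))
          have hnn : (0:ℝ) ≤ ((n:ℝ) * (c * γ ^ i)) * ‖P‖ :=
            mul_nonneg (mul_nonneg (Nat.cast_nonneg n)
              (mul_nonneg hc0 (pow_nonneg hγ0.le i))) (norm_nonneg _)
          calc ‖((Fᵀ) ^ i * P) *ᵥ w (t + i)‖ ≤ ‖(Fᵀ) ^ i * P‖ * ‖w (t + i)‖ :=
                Matrix.linfty_opNorm_mulVec _ _
            _ ≤ (((n:ℝ) * (c * γ ^ i)) * ‖P‖) * r :=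
                mul_le_mul h1 hwi (norm_nonneg _) hnn
            _ = ((n:ℝ) * c * ‖P‖ * r) * γ ^ i := by ring
      _ = ((n:ℝ) * c * ‖P‖ * r) * ∑ i ∈ Finset.range (T - t), γ ^ i := by
          rw [Finset.mul_sum]
      _ ≤ S := by
          rw [hS]
          exact mul_le_mul_of_nonneg_left (gsum γ hγ0.le hγ1 _)
            (mul_nonneg (mul_nonneg (mul_nonneg (Nat.cast_nonneg n) hc0) (norm_nonneg _)) hr.le)
  -- F = A - G * P * A
  have hFGA : F = A - G * P * A := by
    rw [hF, hG]
    congr 1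
    simp [Matrix.mul_assoc]
  -- closed-loop recursions
  have hrecx : ∀ t, x (t + 1) = F *ᵥ x t + (w t + G *ᵥ η t - G *ᵥ ψ t) := by
    intro t
    rw [hψdef, hxrec t, hu t]
    simp only [Matrix.mulVec_neg, Matrix.mulVec_mulVec, Matrix.mulVec_add, Matrix.mulVec_sub]
    rw [hFGA, Matrix.sub_mulVec]
    simp only [Matrix.mulVec_mulVec, ← Matrix.mul_assoc, ← hG]
    abel
  have hrecxs : ∀ t, xs (t + 1) = F *ᵥ xs t + (w t - G *ᵥ ψ t) := by
    intro t
    rw [hψdef, hxsrec t, hus t]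
    simp only [Matrix.mulVec_neg, Matrix.mulVec_mulVec, Matrix.mulVec_add, Matrix.mulVec_sub]
    rw [hFGA, Matrix.sub_mulVec]
    simp only [Matrix.mulVec_mulVec, ← Matrix.mul_assoc, ← hG]
    abel
  -- disturbance bounds
  have hdx : ∀ t, t < T → ‖w t + G *ᵥ η t - G *ᵥ ψ t‖ ≤ D := by
    intro t ht
    have h1 : ‖G *ᵥ η t‖ ≤ ‖G‖ * C :=
      le_trans (Matrix.linfty_opNorm_mulVec _ _)
        (mul_le_mul_of_nonneg_left (hηb t ht) (norm_nonneg _))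
    have h2 : ‖G *ᵥ ψ t‖ ≤ ‖G‖ * S :=
      le_trans (Matrix.linfty_opNorm_mulVec _ _)
        (mul_le_mul_of_nonneg_left (hψb t ht) (norm_nonneg _))
    calc ‖w t + G *ᵥ η t - G *ᵥ ψ t‖ ≤ ‖w t + G *ᵥ η t‖ + ‖G *ᵥ ψ t‖ := norm_sub_le _ _
      _ ≤ ‖w t‖ + ‖G *ᵥ η t‖ + ‖G *ᵥ ψ t‖ := by
          have := norm_add_le (w t) (G *ᵥ η t); linarith
      _ ≤ D := by
          have := hwb t ht
          rw [hD]; rw [mul_add ‖G‖ C S] ; linarith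
  have hdxs : ∀ t, t < T → ‖w t - G *ᵥ ψ t‖ ≤ D := by
    intro t ht
    have h2 : ‖G *ᵥ ψ t‖ ≤ ‖G‖ * S :=
      le_trans (Matrix.linfty_opNorm_mulVec _ _)
        (mul_le_mul_of_nonneg_left (hψb t ht) (norm_nonneg _))
    have h3 : (0:ℝ) ≤ ‖G‖ * C := mul_nonneg (norm_nonneg _) hC.le
    calc ‖w t - G *ᵥ ψ t‖ ≤ ‖w t‖ + ‖G *ᵥ ψ t‖ := norm_sub_le _ _
      _ ≤ D := by
          have := hwb t ht
          rw [hD]; rw [mul_add ‖G‖ C S]; linarith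
  -- state bounds
  have hxb : ∀ t, t ≤ T → ‖x t‖ ≤ Xb := by
    have := state_bound F c γ D hc hγ0 hγ1 hpow hD0 x
      (fun t => w t + G *ᵥ η t - G *ᵥ ψ t) T (fun t _ => hrecx t) hdx
    rw [hx0, ← hXb] at this
    exact this
  have hxsb : ∀ t, t ≤ T → ‖xs t‖ ≤ Xb := by
    have := state_bound F c γ D hc hγ0 hγ1 hpow hD0 xs
      (fun t => w t - G *ᵥ ψ t) T (fun t _ => hrecxs t) hdxs
    rw [hxs0, ← hXb] at this
    exact this
  -- seqState = x
  have hseq : ∀ t, seqState A B x0 u w t = x t := by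
    intro t
    induction t with
    | zero => rw [hx0]; rfl
    | succ t ih => rw [seqState, ih, hxrec t]
  have hseqs : ∀ t, seqState A B x0 us w t = xs t := by
    intro t
    induction t with
    | zero => rw [hxs0]; rfl
    | succ t ih => rw [seqState, ih, hxsrec t]
  -- final assembly
  have hxT := hxb T le_rfl
  have hxsT := hxsb T le_rfl
  have q1 := abs_le.mp (quad_bound Qf (x T) Xb hxT)
  have q2 := abs_le.mp (quad_bound P (x T) Xb hxT)
  have q3 := abs_le.mp (quad_bound Qf (xs T) Xb hxsT)
  have q4 := abs_le.mp (quad_bound P (xs T) Xb hxsT)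
  simp only [trajCost, hseq T, hseqs T]
  obtain ⟨q1a, q1b⟩ := q1
  obtain ⟨q2a, q2b⟩ := q2
  obtain ⟨q3a, q3b⟩ := q3
  obtain ⟨q4a, q4b⟩ := q4
  linarith
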